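/- Let A be a ∨-system, α ∈ A, and Π_α = {x : α(x) = 0}. If x ∈ Π_α with β(x) ≠ 0 for all β ∈ A \ {±α}, and u, v are tangent to Π_α (i.e., α(u) = α(v) = 0), then α applied to Σ_{β∈A, β≠α} (β(u)β(v)/β(x)) β^∨ is zero; that is, the product u*v is again tangent to Π_α. -/

import Mathlib

open Matrix
open scoped Classical

/-- The Gram matrix `G^A = Σ_{α∈A} α⊗α` of a finite set of covectors in `(ℝⁿ)*`. -/
noncomputable def gram {n : ℕ} (A : Finset (Fin n → ℝ)) : Matrix (Fin n) (Fin n) ℝ :=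
  ∑ α ∈ A, vecMulVec α α

/-- The vector `α^∨` dual to the covector `α` with respect to `G^A`. -/
noncomputable def vee {n : ℕ} (A : Finset (Fin n → ℝ)) (α : Fin n → ℝ) : Fin n → ℝ :=
  (gram A)⁻¹ *ᵥ α

/-- `A` is a ∨-system: a finite spanning set of covectors with non-degenerate Gram form
such that for every two-dimensional plane `Π` and every `α ∈ Pl ∩ A`, the vector
`Σ_{β ∈ Pl∩A} β(α^∨) β^∨` is proportional to `α^∨`. -/
def IsVeeSystem {n : ℕ} (A : Finset (Fin n → ℝ)) : Prop :=
  Submodule.span ℝ (A : Set (Fin n → ℝ)) = ⊤ ∧ IsUnit (gram A) ∧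
    ∀ Pl : Submodule ℝ (Fin n → ℝ), Module.finrank ℝ Pl = 2 →
      ∀ α ∈ A, α ∈ Pl → ∃ lam : ℝ,
        ∑ β ∈ A.filter (fun β => β ∈ Pl), (β ⬝ᵥ vee A α) • vee A β = lam • vee A α


lemma dotProduct_finset_sum {n : ℕ} {ι : Type*} (s : Finset ι) (v : Fin n → ℝ)
    (w : ι → Fin n → ℝ) : v ⬝ᵥ (∑ i ∈ s, w i) = ∑ i ∈ s, v ⬝ᵥ w i := by
  simp only [dotProduct, Finset.sum_apply, Finset.mul_sum]
  exact Finset.sum_comm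

/-- The gram matrix is symmetric. -/
lemma gram_symm {n : ℕ} (A : Finset (Fin n → ℝ)) : (gram A)ᵀ = gram A := by
  ext i j
  simp [_root_.gram, Matrix.transpose_apply, Matrix.sum_apply, vecMulVec_apply, mul_comm]

lemma gram_mulVec_vee {n : ℕ} (A : Finset (Fin n → ℝ)) (hG : IsUnit (gram A))
    (β : Fin n → ℝ) : gram A *ᵥ vee A β = β := by
  have hdet : IsUnit (gram A).det := (Matrix.isUnit_iff_isUnit_det _).mp hG
  unfold vee
  rw [Matrix.mulVec_mulVec, Matrix.mul_nonsing_inv _ hdet, Matrix.one_mulVec]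

lemma vee_symm {n : ℕ} (A : Finset (Fin n → ℝ)) (γ δ : Fin n → ℝ) :
    γ ⬝ᵥ vee A δ = δ ⬝ᵥ vee A γ := by
  have hinv : ((gram A)⁻¹)ᵀ = (gram A)⁻¹ := by
    rw [Matrix.transpose_nonsing_inv, gram_symm]
  unfold vee
  rw [Matrix.dotProduct_mulVec, ← Matrix.mulVec_transpose, hinv, dotProduct_comm]

/-- if `A` is a ∨-system, `α ∈ A`, `x ∈ Pl_α` with `β(x) ≠ 0` for all
`β ∈ A \ {±α}`, and `u, v` are tangent to `Π_α`, then
`α (Σ_{β∈A, β≠α} (β(u)β(v)/β(x)) β^∨) = 0`, i.e. `u*v` is again tangent to `Π_α`. -/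
theorem product_tangent_to_hyperplane
    {n : ℕ} (A : Finset (Fin n → ℝ)) (hA : IsVeeSystem A)
    (α : Fin n → ℝ) (hα : α ∈ A)
    (x : Fin n → ℝ) (hx : α ⬝ᵥ x = 0)
    (hreg : ∀ β ∈ A, β ≠ α → β ≠ -α → β ⬝ᵥ x ≠ 0)
    (u v : Fin n → ℝ) (hu : α ⬝ᵥ u = 0) (hv : α ⬝ᵥ v = 0) :
    α ⬝ᵥ (∑ β ∈ A.erase α, ((β ⬝ᵥ u) * (β ⬝ᵥ v) / (β ⬝ᵥ x)) • vee A β) = 0 := by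
  classical
  obtain ⟨-, hG, hPlane⟩ := hA
  by_cases hα0 : α = 0
  · subst hα0; simp
  -- abbreviation for the summand after pairing with α
  set f : (Fin n → ℝ) → ℝ :=
    fun β => (β ⬝ᵥ u) * (β ⬝ᵥ v) / (β ⬝ᵥ x) * (β ⬝ᵥ vee A α) with hf
  have hgoal : α ⬝ᵥ (∑ β ∈ A.erase α, ((β ⬝ᵥ u) * (β ⬝ᵥ v) / (β ⬝ᵥ x)) • vee A β)
      = ∑ β ∈ A.erase α, f β := by
    rw [dotProduct_finset_sum]
    refine Finset.sum_congr rfl fun β _ => ?_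
    simp only [hf, dotProduct_smul, vee_symm A α β, smul_eq_mul]
  rw [hgoal]
  -- restrict to the covectors not vanishing on x
  set S := (A.erase α).filter (fun β => β ⬝ᵥ x ≠ 0) with hS
  have hsumS : ∑ β ∈ A.erase α, f β = ∑ β ∈ S, f β := by
    refine (Finset.sum_subset (Finset.filter_subset _ _) fun β hβ hnβ => ?_).symm
    have hβx : β ⬝ᵥ x = 0 := by
      by_contra h
      exact hnβ (Finset.mem_filter.mpr ⟨hβ, h⟩)
    simp [hf, hβx]
  rw [hsumS]
  -- group by the plane spanned by α and β
  set g : (Fin n → ℝ) → Submodule ℝ (Fin n → ℝ) :=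
    fun β => Submodule.span ℝ ({α, β} : Set (Fin n → ℝ)) with hg
  rw [← Finset.sum_fiberwise_of_maps_to (g := g) (t := S.image g)
    (fun β hβ => Finset.mem_image_of_mem g hβ)]
  refine Finset.sum_eq_zero fun Pl hPl => ?_
  obtain ⟨β₀, hβ₀S, hβ₀Pl⟩ := Finset.mem_image.mp hPl
  obtain ⟨hβ₀A', hβ₀x⟩ := Finset.mem_filter.mp hβ₀S
  have hβ₀A : β₀ ∈ A := Finset.mem_of_mem_erase hβ₀A'
  -- α and β₀ are linearly independent
  have hindep : LinearIndependent ℝ ![α, β₀] := by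
    rw [LinearIndependent.pair_iff]
    intro s t hst
    have h1 : (s • α + t • β₀) ⬝ᵥ x = 0 := by rw [hst]; simp
    rw [add_dotProduct, smul_dotProduct, smul_dotProduct, hx] at h1
    have ht : t = 0 := by
      have := h1
      simp only [smul_eq_mul, mul_zero, zero_add] at this
      exact (mul_eq_zero.mp this).resolve_right hβ₀x
    subst ht
    refine ⟨?_, rfl⟩
    simp only [zero_smul, add_zero] at hst
    exact (smul_eq_zero.mp hst).resolve_right hα0
  have hrank : Module.finrank ℝ (Submodule.span ℝ ({α, β₀} : Set (Fin n → ℝ))) = 2 := by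
    have := finrank_span_eq_card hindep
    have hr : Set.range ![α, β₀] = ({α, β₀} : Set (Fin n → ℝ)) := by
      rw [Set.pair_comm α β₀]; simp [Matrix.range_cons]
    rw [hr] at this
    simpa using this
  have hαPl : α ∈ Pl := by
    rw [← hβ₀Pl]
    exact Submodule.subset_span (Set.mem_insert _ _)
  have hβ₀Pl' : β₀ ∈ Pl := by
    rw [← hβ₀Pl]
    exact Submodule.subset_span (Set.mem_insert_of_mem _ rfl)
  have hrankPl : Module.finrank ℝ Pl = 2 := by rw [← hβ₀Pl]; exact hrank
  -- the ∨-system condition on this plane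
  obtain ⟨lam, hlam⟩ := hPlane Pl hrankPl α hα hαPl
  have key : ∑ β ∈ A.filter (fun β => β ∈ Pl), (β ⬝ᵥ vee A α) * (β ⬝ᵥ x) = 0 := by
    have h2 : ∀ β : Fin n → ℝ, (x ᵥ* gram A) ⬝ᵥ vee A β = x ⬝ᵥ β := fun β => by
      rw [← Matrix.dotProduct_mulVec, gram_mulVec_vee A hG]
    have h1 := congrArg (fun w => (x ᵥ* gram A) ⬝ᵥ w) hlam
    simp only [dotProduct_finset_sum, dotProduct_smul, smul_eq_mul, h2] at h1
    rw [dotProduct_comm x α, hx, mul_zero] at h1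
    rw [← h1]
    refine Finset.sum_congr rfl fun β _ => ?_
    rw [dotProduct_comm x β]
  -- each term in the fiber is a fixed multiple of (β ⬝ᵥ vee A α) * (β ⬝ᵥ x)
  set C : ℝ := (β₀ ⬝ᵥ u) * (β₀ ⬝ᵥ v) / ((β₀ ⬝ᵥ x) * (β₀ ⬝ᵥ x)) with hC
  have hfiber : ∀ β ∈ S.filter (fun b => g b = Pl),
      f β = C * ((β ⬝ᵥ vee A α) * (β ⬝ᵥ x)) := by
    intro β hβ
    obtain ⟨hβS, hβg⟩ := Finset.mem_filter.mp hβ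
    obtain ⟨hβA', hβx⟩ := Finset.mem_filter.mp hβS
    have hβPl : β ∈ Submodule.span ℝ ({α, β₀} : Set (Fin n → ℝ)) := by
      have hPl' : Submodule.span ℝ ({α, β₀} : Set (Fin n → ℝ)) = Pl := hβ₀Pl
      rw [hPl', ← hβg]
      exact Submodule.subset_span (Set.mem_insert_of_mem _ rfl)
    obtain ⟨a, b, hab⟩ := Submodule.mem_span_pair.mp hβPl
    have hβu : β ⬝ᵥ u = b * (β₀ ⬝ᵥ u) := by
      rw [← hab, add_dotProduct, smul_dotProduct, smul_dotProduct, hu]; simp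
    have hβv : β ⬝ᵥ v = b * (β₀ ⬝ᵥ v) := by
      rw [← hab, add_dotProduct, smul_dotProduct, smul_dotProduct, hv]; simp
    have hβx' : β ⬝ᵥ x = b * (β₀ ⬝ᵥ x) := by
      rw [← hab, add_dotProduct, smul_dotProduct, smul_dotProduct, hx]; simp
    have hb : b ≠ 0 := by
      intro h; rw [h, zero_mul] at hβx'; exact hβx hβx'
    rw [hf]
    simp only
    rw [hβu, hβv, hβx']
    field_simp [hC]
    rw [hC]; field_simp
  rw [Finset.sum_congr rfl hfiber, ← Finset.mul_sum]
  have hsub : S.filter (fun b => g b = Pl) ⊆ A.filter (fun β => β ∈ Pl) := by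
    intro β hβ
    obtain ⟨hβS, hβg⟩ := Finset.mem_filter.mp hβ
    obtain ⟨hβA', _⟩ := Finset.mem_filter.mp hβS
    refine Finset.mem_filter.mpr ⟨Finset.mem_of_mem_erase hβA', ?_⟩
    rw [← hβg]
    exact Submodule.subset_span (Set.mem_insert_of_mem _ rfl)
  have hvanish : ∀ β ∈ A.filter (fun β => β ∈ Pl), β ∉ S.filter (fun b => g b = Pl) →
      (β ⬝ᵥ vee A α) * (β ⬝ᵥ x) = 0 := by
    intro β hβ hnβ
    obtain ⟨hβA, hβPl⟩ := Finset.mem_filter.mp hβ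
    by_cases hβx : β ⬝ᵥ x = 0
    · rw [hβx, mul_zero]
    · exfalso
      apply hnβ
      have hβα : β ≠ α := by
        intro h; rw [h] at hβx; exact hβx hx
      have hβS : β ∈ S := Finset.mem_filter.mpr
        ⟨Finset.mem_erase.mpr ⟨hβα, hβA⟩, hβx⟩
      refine Finset.mem_filter.mpr ⟨hβS, ?_⟩
      -- span{α, β} = Pl since both are 2-dimensional and span{α,β} ≤ Pl
      have hle : Submodule.span ℝ ({α, β} : Set (Fin n → ℝ)) ≤ Pl := by
        rw [Submodule.span_le]
        intro y hy
        rcases hy with h | h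
        · rw [h]; exact hαPl
        · rw [Set.mem_singleton_iff.mp h]; exact hβPl
      have hindep' : LinearIndependent ℝ ![α, β] := by
        rw [LinearIndependent.pair_iff]
        intro s t hst
        have h1 : (s • α + t • β) ⬝ᵥ x = 0 := by rw [hst]; simp
        rw [add_dotProduct, smul_dotProduct, smul_dotProduct, hx] at h1
        have ht : t = 0 := by
          simp only [smul_eq_mul, mul_zero, zero_add] at h1
          exact (mul_eq_zero.mp h1).resolve_right hβx
        subst ht
        refine ⟨?_, rfl⟩
        simp only [zero_smul, add_zero] at hst
        exact (smul_eq_zero.mp hst).resolve_right hα0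
      have hrank' : Module.finrank ℝ (Submodule.span ℝ ({α, β} : Set (Fin n → ℝ))) = 2 := by
        have := finrank_span_eq_card hindep'
        have hr : Set.range ![α, β] = ({α, β} : Set (Fin n → ℝ)) := by
          rw [Set.pair_comm α β]; simp [Matrix.range_cons]
        rw [hr] at this
        simpa using this
      exact Submodule.eq_of_le_of_finrank_eq hle (by rw [hrank', hrankPl])
  rw [Finset.sum_subset hsub hvanish, key, mul_zero]
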